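/- Consider the rational vector system with a real symmetric m×m matrix A all of whose entries are strictly positive and damping vectors q_{ij} ∈ [0,∞)^m. If the spectral radius of A is equal to 1, then every solution (v_n) converges to a periodic solution of (not necessarily prime) period k: there exists a sequence p : ℕ → [0,∞)^m with p_{n+k} = p_n for all n such that lim_{n→∞} ‖v_n − p_n‖ = 0. -/

import Mathlib

open Matrix Filter
open scoped ENNReal NNReal

/-- `v` is a solution of the rational vector system
`v_{n,i} = (A v_{n−k})_i / (1 + Σ_{j=1}^{k−1} ⟨q_{ij}, v_{n−j}⟩)` for `n ≥ k`,
with nonnegative values. -/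
def IsRationalSolution {m : ℕ} (k : ℕ) (A : Matrix (Fin m) (Fin m) ℝ)
    (q : Fin m → ℕ → Fin m → ℝ) (v : ℕ → Fin m → ℝ) : Prop :=
  (∀ n i, 0 ≤ v n i) ∧
  ∀ n, k ≤ n → ∀ i,
    v n i = (A *ᵥ v (n - k)) i / (1 + ∑ j ∈ Finset.Ico 1 k, (q i j) ⬝ᵥ v (n - j))

/-- The Euclidean norm on `ℝ^m`. -/
noncomputable def euclNorm {m : ℕ} (w : Fin m → ℝ) : ℝ :=
  Real.sqrt (∑ i, (w i) ^ 2)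

namespace Stmt10Aux

variable {m : ℕ}

lemma dot_combo (B : Fin m → Fin m → ℝ)
    (horth : ∀ i i', ∑ j, B i j * B i' j = if i = i' then 1 else 0)
    (d e : Fin m → ℝ) :
    ∑ j, (∑ i, d i * B i j) * (∑ i', e i' * B i' j) = ∑ i, d i * e i := by
  calc ∑ j, (∑ i, d i * B i j) * (∑ i', e i' * B i' j)
      = ∑ j, ∑ i, ∑ i', (d i * B i j) * (e i' * B i' j) := by
        refine Finset.sum_congr rfl fun j _ => ?_
        rw [Finset.sum_mul_sum]
    _ = ∑ i, ∑ i', ∑ j, (d i * B i j) * (e i' * B i' j) := by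
        rw [Finset.sum_comm]
        exact Finset.sum_congr rfl fun i _ => Finset.sum_comm
    _ = ∑ i, ∑ i', d i * e i' * ∑ j, B i j * B i' j := by
        refine Finset.sum_congr rfl fun i _ => Finset.sum_congr rfl fun i' _ => ?_
        rw [Finset.mul_sum]
        exact Finset.sum_congr rfl fun j _ => by ring
    _ = ∑ i, d i * e i := by
        refine Finset.sum_congr rfl fun i _ => ?_
        simp only [horth, mul_ite, mul_one, mul_zero, Finset.sum_ite_eq, Finset.mem_univ, if_true]

lemma abs_sum_lt (t : Fin m → ℝ) (p q : Fin m) (hp : 0 < t p) (hq : t q < 0) :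
    |∑ j, t j| < ∑ j, |t j| := by
  have e1 : t q + ∑ j ∈ Finset.univ.erase q, t j = ∑ j, t j :=
    Finset.add_sum_erase _ _ (Finset.mem_univ q)
  have e2 : |t q| + ∑ j ∈ Finset.univ.erase q, |t j| = ∑ j, |t j| :=
    Finset.add_sum_erase _ (fun j => |t j|) (Finset.mem_univ q)
  have e3 : (-t p) + ∑ j ∈ Finset.univ.erase p, (-t j) = ∑ j, (-t j) :=
    Finset.add_sum_erase _ (fun j => -t j) (Finset.mem_univ p)
  have e4 : |t p| + ∑ j ∈ Finset.univ.erase p, |t j| = ∑ j, |t j| :=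
    Finset.add_sum_erase _ (fun j => |t j|) (Finset.mem_univ p)
  have b1 : ∑ j ∈ Finset.univ.erase q, t j ≤ ∑ j ∈ Finset.univ.erase q, |t j| :=
    Finset.sum_le_sum fun j _ => le_abs_self _
  have b2 : ∑ j ∈ Finset.univ.erase p, (-t j) ≤ ∑ j ∈ Finset.univ.erase p, |t j| :=
    Finset.sum_le_sum fun j _ => neg_le_abs _
  have habsq : |t q| = -t q := abs_of_neg hq
  have habsp : |t p| = t p := abs_of_pos hp
  have e5 : ∑ j, (-t j) = -∑ j, t j := by rw [Finset.sum_neg_distrib]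
  rw [abs_lt]
  constructor <;> nlinarith [abs_pos.2 (ne_of_gt hp), abs_pos.2 (ne_of_lt hq)]

lemma geom_rec (c : ℝ) (hc0 : 0 ≤ c) (hc1 : c < 1) (b d : ℕ → ℝ)
    (hb : ∀ n, 0 ≤ b n) (hrec : ∀ n, b (n + 1) ≤ c * b n + d n)
    (hd : Tendsto d atTop (nhds 0)) : Tendsto b atTop (nhds 0) := by
  rw [Metric.tendsto_atTop] at hd ⊢
  intro ε hε
  obtain ⟨M, hM⟩ := hd ((1 - c) * ε / 2) (by nlinarith)
  have key : ∀ j, b (M + j) ≤ c ^ j * b M + ε / 2 := by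
    intro j
    induction j with
    | zero => simpa using by linarith [hb M, hε]
    | succ j ih =>
      have hdj : d (M + j) ≤ (1 - c) * ε / 2 := by
        have := hM (M + j) (Nat.le_add_right _ _)
        rw [Real.dist_eq, sub_zero] at this
        exact le_of_lt ((abs_lt.1 this).2)
      calc b (M + (j + 1)) = b ((M + j) + 1) := by ring_nf
        _ ≤ c * b (M + j) + d (M + j) := hrec _
        _ ≤ c * (c ^ j * b M + ε / 2) + (1 - c) * ε / 2 :=
            add_le_add (mul_le_mul_of_nonneg_left ih hc0) hdj
        _ = c ^ (j + 1) * b M + (c * (ε / 2) + (1 - c) * ε / 2) := by ring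
        _ ≤ c ^ (j + 1) * b M + ε / 2 := by nlinarith
  obtain ⟨J, hJ⟩ : ∃ J, c ^ J * b M < ε / 2 := by
    have h1 : Tendsto (fun n : ℕ => c ^ n * b M) atTop (nhds 0) := by
      simpa using (tendsto_pow_atTop_nhds_zero_of_lt_one hc0 hc1).mul_const (b M)
    exact (h1.eventually_lt_const (half_pos hε)).exists
  refine ⟨M + J, fun n hn => ?_⟩
  have hMn : M ≤ n := le_trans (Nat.le_add_right _ _) hn
  have h2 : b n ≤ c ^ (n - M) * b M + ε / 2 := by
    have := key (n - M)
    rwa [Nat.add_sub_cancel' hMn] at this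
  have h3 : c ^ (n - M) * b M ≤ c ^ J * b M := by
    apply mul_le_mul_of_nonneg_right _ (hb M)
    exact pow_le_pow_of_le_one hc0 (le_of_lt hc1) (Nat.le_sub_of_add_le (by omega))
  rw [Real.dist_eq, sub_zero, abs_of_nonneg (hb n)]
  linarith

lemma symdot (A : Matrix (Fin m) (Fin m) ℝ) (hsymm : A.IsSymm) (a b : Fin m → ℝ) :
    ∑ i, a i * (A *ᵥ b) i = ∑ i, (A *ᵥ a) i * b i := by
  have hAij : ∀ i j, A i j = A j i := fun i j => by
    conv_rhs => rw [← hsymm]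
    rfl
  have hmv : ∀ (x : Fin m → ℝ) i, (A *ᵥ x) i = ∑ j, A i j * x j := fun x i => rfl
  simp only [hmv]
  calc ∑ i, a i * ∑ j, A i j * b j = ∑ i, ∑ j, A j i * a i * b j := by
        refine Finset.sum_congr rfl fun i _ => ?_
        rw [Finset.mul_sum]
        refine Finset.sum_congr rfl fun j _ => ?_
        rw [hAij i j]; ring
    _ = ∑ j, ∑ i, A j i * a i * b j := Finset.sum_comm
    _ = ∑ j, (∑ i, A j i * a i) * b j := by
        refine Finset.sum_congr rfl fun j _ => ?_
        rw [Finset.sum_mul]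

lemma expand_sq (u s : Fin m → ℝ) (hu1 : ∑ i, u i ^ 2 = 1)
    (hs : ∑ i, u i * s i = 0) (a : ℝ) :
    ∑ i, (a * u i + s i) ^ 2 = a ^ 2 + ∑ i, (s i) ^ 2 := by
  have h1 : ∀ i ∈ Finset.univ, (a * u i + s i) ^ 2
      = a ^ 2 * u i ^ 2 + 2 * a * (u i * s i) + s i ^ 2 := fun i _ => by ring
  rw [Finset.sum_congr rfl h1, Finset.sum_add_distrib, Finset.sum_add_distrib,
    ← Finset.mul_sum, ← Finset.mul_sum, hu1, hs]
  ring

lemma perron (hm : 1 ≤ m) (A : Matrix (Fin m) (Fin m) ℝ) (hsymm : A.IsSymm)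
    (hposA : ∀ i j, 0 < A i j) (hρ : spectralRadius ℝ A = 1) :
    ∃ (u : Fin m → ℝ) (μ : ℝ),
      (∀ i, 0 < u i) ∧ A *ᵥ u = u ∧ (∑ i, u i ^ 2 = 1) ∧ 0 ≤ μ ∧ μ < 1 ∧
      (∀ y : Fin m → ℝ, (∑ i, u i * y i) = 0 →
        ∑ j, ((A *ᵥ y) j) ^ 2 ≤ μ ^ 2 * ∑ j, (y j) ^ 2) := by
  have hne : Nonempty (Fin m) := ⟨⟨0, hm⟩⟩
  have hmv : ∀ (x : Fin m → ℝ) i, (A *ᵥ x) i = ∑ j, A i j * x j := fun x i => rfl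
  have hA : A.IsHermitian := by
    rw [Matrix.IsHermitian, conjTranspose_eq_transpose_of_trivial]; exact hsymm
  set lam := hA.eigenvalues with hlam
  set B : Fin m → Fin m → ℝ := fun i => ⇑(hA.eigenvectorBasis i) with hB
  have horth : ∀ i i', ∑ j, B i j * B i' j = if i = i' then 1 else 0 := by
    intro i i'
    have h := hA.eigenvectorBasis.orthonormal
    rw [orthonormal_iff_ite] at h
    have h2 := h i i'
    rw [← h2]
    simp [PiLp.inner_apply, RCLike.inner_apply, mul_comm, hB]
  set co : (Fin m → ℝ) → Fin m → ℝ := fun x i => ∑ l, B i l * x l with hco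
  have hexp : ∀ (x : Fin m → ℝ) (j : Fin m), x j = ∑ i, co x i * B i j := by
    intro x j
    set b := hA.eigenvectorBasis
    set X : EuclideanSpace ℝ (Fin m) := (WithLp.equiv 2 (Fin m → ℝ)).symm x with hX
    have hrep : ∀ i, b.repr X i = ∑ l, b i l * x l := by
      intro i
      rw [b.repr_apply_apply]
      simp [PiLp.inner_apply, RCLike.inner_apply, hX, mul_comm]
    have hsum := b.sum_repr X
    have h3 := congrArg (fun z : EuclideanSpace ℝ (Fin m) => z j) hsum
    simp only at h3
    have hXj : x j = X j := rfl
    rw [hXj, ← h3, WithLp.ofLp_sum, Finset.sum_apply]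
    refine Finset.sum_congr rfl fun i _ => ?_
    rw [hrep]
    rfl
  have hAB : ∀ i, A *ᵥ B i = lam i • B i := fun i => hA.mulVec_eigenvectorBasis i
  obtain ⟨i0, hi0, hall⟩ : ∃ i0, |lam i0| = 1 ∧ ∀ i, |lam i| ≤ 1 := by
    have hspec := hA.spectrum_real_eq_range_eigenvalues
    rw [spectralRadius, hspec, iSup_range] at hρ
    obtain ⟨i0, hi0⟩ := Finite.exists_max (fun i => ‖lam i‖₊)
    have hsup : (⨆ i, (‖lam i‖₊ : ℝ≥0∞)) = (‖lam i0‖₊ : ℝ≥0∞) :=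
      le_antisymm (iSup_le fun i => ENNReal.coe_le_coe.2 (hi0 i))
        (le_iSup (fun i => (‖lam i‖₊ : ℝ≥0∞)) i0)
    rw [hsup] at hρ
    have h1 : ‖lam i0‖₊ = 1 := by exact_mod_cast hρ
    have habs : |lam i0| = 1 := by
      have h2 := congrArg (fun x : ℝ≥0 => (x : ℝ)) h1
      simpa [Real.norm_eq_abs] using h2
    refine ⟨i0, habs, fun i => ?_⟩
    have h3 := hi0 i
    rw [h1] at h3
    have h4 : (‖lam i‖₊ : ℝ) ≤ 1 := by exact_mod_cast h3
    simpa [Real.norm_eq_abs] using h4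
  -- Parseval
  have hpars : ∀ x : Fin m → ℝ, ∑ j, (x j) ^ 2 = ∑ i, (co x i) ^ 2 := by
    intro x
    calc ∑ j, (x j) ^ 2 = ∑ j, (∑ i, co x i * B i j) * (∑ i', co x i' * B i' j) := by
          refine Finset.sum_congr rfl fun j _ => ?_
          rw [← hexp x j]; ring
      _ = ∑ i, co x i * co x i := dot_combo B horth _ _
      _ = ∑ i, (co x i) ^ 2 := by
          refine Finset.sum_congr rfl fun i _ => (sq _).symm
  -- mulVec expansion
  have hmul : ∀ (x : Fin m → ℝ) (j' : Fin m),
      (A *ᵥ x) j' = ∑ i, (co x i * lam i) * B i j' := by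
    intro x j'
    calc (A *ᵥ x) j' = ∑ j, A j' j * x j := hmv x j'
      _ = ∑ j, ∑ i, co x i * (A j' j * B i j) := by
          refine Finset.sum_congr rfl fun j _ => ?_
          rw [hexp x j, Finset.mul_sum]
          exact Finset.sum_congr rfl fun i _ => by ring
      _ = ∑ i, ∑ j, co x i * (A j' j * B i j) := Finset.sum_comm
      _ = ∑ i, co x i * ((A *ᵥ B i) j') := by
          refine Finset.sum_congr rfl fun i _ => ?_
          rw [hmv (B i) j', Finset.mul_sum]
      _ = ∑ i, (co x i * lam i) * B i j' := by
          refine Finset.sum_congr rfl fun i _ => ?_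
          rw [hAB i]
          simp [Pi.smul_apply, smul_eq_mul]
          ring
  -- Rayleigh bound
  have hray : ∀ y : Fin m → ℝ, ∑ j, y j * (A *ᵥ y) j ≤ ∑ j, (y j) ^ 2 := by
    intro y
    have h1 : ∑ j, y j * (A *ᵥ y) j = ∑ i, co y i * (co y i * lam i) := by
      calc ∑ j, y j * (A *ᵥ y) j
          = ∑ j, (∑ i, co y i * B i j) * (∑ i', (co y i' * lam i') * B i' j) := by
            refine Finset.sum_congr rfl fun j _ => ?_
            rw [← hexp y j, ← hmul y j]
        _ = ∑ i, co y i * (co y i * lam i) := dot_combo B horth _ _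
    rw [h1, hpars y]
    refine Finset.sum_le_sum fun i _ => ?_
    have h2 := hall i
    have h3 := abs_nonneg (lam i)
    have h4 := sq_nonneg (co y i)
    nlinarith [le_abs_self (lam i), neg_abs_le (lam i)]
  -- componentwise abs bound
  have habsA : ∀ (x : Fin m → ℝ) (i : Fin m),
      |(A *ᵥ x) i| ≤ (A *ᵥ fun j => |x j|) i := by
    intro x i
    rw [hmv, hmv]
    calc |∑ j, A i j * x j| ≤ ∑ j, |A i j * x j| := Finset.abs_sum_le_sum_abs _ _
      _ = ∑ j, A i j * |x j| := by
        refine Finset.sum_congr rfl fun j _ => ?_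
        rw [abs_mul, abs_of_pos (hposA i j)]
  -- monotonicity
  have hmono : ∀ z z' : Fin m → ℝ, (∀ j, z j ≤ z' j) → ∀ i, (A *ᵥ z) i ≤ (A *ᵥ z') i := by
    intro z z' hzz i
    rw [hmv, hmv]
    exact Finset.sum_le_sum fun j _ => mul_le_mul_of_nonneg_left (hzz j) (hposA i j).le
  -- fixed point from subinvariance + positivity
  have fix1 : ∀ z : Fin m → ℝ, (∀ i, z i ≤ (A *ᵥ z) i) → (∀ i, 0 < z i) → A *ᵥ z = z := by
    intro z hle hpos
    have hsum_le : ∑ i, z i * ((A *ᵥ z) i - z i) ≤ 0 := by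
      have h1 : ∑ i, z i * ((A *ᵥ z) i - z i)
          = ∑ i, z i * (A *ᵥ z) i - ∑ i, (z i) ^ 2 := by
        rw [← Finset.sum_sub_distrib]
        refine Finset.sum_congr rfl fun i _ => by ring
      rw [h1]
      have := hray z
      linarith
    have hterm : ∀ i ∈ Finset.univ, (0:ℝ) ≤ z i * ((A *ᵥ z) i - z i) :=
      fun i _ => mul_nonneg (hpos i).le (sub_nonneg.2 (hle i))
    have hzero : ∑ i, z i * ((A *ᵥ z) i - z i) = 0 :=
      le_antisymm hsum_le (Finset.sum_nonneg hterm)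
    funext i
    have h2 := (Finset.sum_eq_zero_iff_of_nonneg hterm).1 hzero i (Finset.mem_univ i)
    have h3 : (A *ᵥ z) i - z i = 0 := by
      rcases mul_eq_zero.1 h2 with h | h
      · exact absurd h (ne_of_gt (hpos i))
      · exact h
    linarith
  -- subinvariance of abs of eigenvector
  have hz_of_eig : ∀ (x : Fin m → ℝ) (ν : ℝ), |ν| = 1 → A *ᵥ x = ν • x →
      ∀ i, |x i| ≤ (A *ᵥ fun j => |x j|) i := by
    intro x ν hν heig i
    have h1 := habsA x i
    rw [heig] at h1
    calc |x i| = |ν * x i| := by rw [abs_mul, hν, one_mul]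
      _ = |(ν • x) i| := rfl
      _ ≤ _ := h1
  -- B i is nonzero
  have hBne : ∀ i, ∃ j, B i j ≠ 0 := by
    intro i
    by_contra h
    push_neg at h
    have h1 := horth i i
    rw [if_pos rfl] at h1
    have h2 : ∑ j, B i j * B i j = 0 :=
      Finset.sum_eq_zero fun j _ => by rw [h j, mul_zero]
    rw [h2] at h1
    exact one_ne_zero h1.symm
  -- construct the Perron vector
  obtain ⟨j0, hj0⟩ := hBne i0
  set z0 : Fin m → ℝ := fun j => |B i0 j| with hz0
  have hz0le : ∀ i, z0 i ≤ (A *ᵥ z0) i := hz_of_eig (B i0) (lam i0) hi0 (hAB i0)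
  set w : Fin m → ℝ := A *ᵥ z0 with hw
  have hw_pos : ∀ i, 0 < w i := by
    intro i
    rw [hw, hmv]
    refine Finset.sum_pos' (fun j _ => mul_nonneg (hposA i j).le (abs_nonneg _)) ?_
    exact ⟨j0, Finset.mem_univ j0, mul_pos (hposA i j0) (abs_pos.2 hj0)⟩
  have hwle : ∀ i, w i ≤ (A *ᵥ w) i := fun i => le_trans (hmono z0 w hz0le i) (le_refl _)
  have hwfix : A *ᵥ w = w := fix1 w hwle hw_pos
  set c : ℝ := Real.sqrt (∑ i, w i ^ 2) with hc
  have hsum_pos : 0 < ∑ i, w i ^ 2 := by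
    refine Finset.sum_pos (fun i _ => pow_pos (hw_pos i) 2) Finset.univ_nonempty
  have hc_pos : 0 < c := Real.sqrt_pos.2 hsum_pos
  set u : Fin m → ℝ := fun i => c⁻¹ * w i with hu
  have hu_pos : ∀ i, 0 < u i := fun i => mul_pos (inv_pos.2 hc_pos) (hw_pos i)
  have hAu : A *ᵥ u = u := by
    have h1 : u = c⁻¹ • w := rfl
    rw [h1, mulVec_smul, hwfix]
  have hu1 : ∑ i, u i ^ 2 = 1 := by
    have h1 : ∑ i, u i ^ 2 = c⁻¹ ^ 2 * ∑ i, w i ^ 2 := by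
      rw [Finset.mul_sum]
      exact Finset.sum_congr rfl fun i _ => by rw [hu]; ring
    rw [h1, hc, inv_pow, Real.sq_sqrt hsum_pos.le]
    exact inv_mul_cancel₀ (ne_of_gt hsum_pos)
  -- strict sign of eigenvectors with |eigenvalue| = 1
  have hsign : ∀ (x : Fin m → ℝ) (ν : ℝ), |ν| = 1 → A *ᵥ x = ν • x →
      (∃ j, x j ≠ 0) → (∀ i, 0 < x i) ∨ (∀ i, x i < 0) := by
    intro x ν hν heig hxne
    obtain ⟨jx, hjx⟩ := hxne
    set z : Fin m → ℝ := fun j => |x j| with hz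
    have hzle : ∀ i, z i ≤ (A *ᵥ z) i := hz_of_eig x ν hν heig
    have h0 : ∑ i, u i * ((A *ᵥ z) i - z i) = 0 := by
      have h1 : ∑ i, u i * ((A *ᵥ z) i - z i)
          = ∑ i, u i * (A *ᵥ z) i - ∑ i, u i * z i := by
        rw [← Finset.sum_sub_distrib]
        exact Finset.sum_congr rfl fun i _ => by ring
      rw [h1, symdot A hsymm u z, hAu]
      ring
    have heqz : ∀ i, (A *ᵥ z) i = z i := by
      intro i
      have hterm : ∀ i ∈ Finset.univ, (0:ℝ) ≤ u i * ((A *ᵥ z) i - z i) :=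
        fun i _ => mul_nonneg (hu_pos i).le (sub_nonneg.2 (hzle i))
      have h2 := (Finset.sum_eq_zero_iff_of_nonneg hterm).1 h0 i (Finset.mem_univ i)
      rcases mul_eq_zero.1 h2 with h | h
      · exact absurd h (ne_of_gt (hu_pos i))
      · linarith
    have hz_pos : ∀ i, 0 < z i := by
      intro i
      rw [← heqz i, hmv]
      refine Finset.sum_pos' (fun j _ => mul_nonneg (hposA i j).le (abs_nonneg _)) ?_
      exact ⟨jx, Finset.mem_univ jx, mul_pos (hposA i jx) (abs_pos.2 hjx)⟩
    have hx_ne : ∀ i, x i ≠ 0 := fun i => abs_pos.1 (hz_pos i)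
    have hnomix : ∀ p q : Fin m, 0 < x p → x q < 0 → False := by
      intro p q hp hq
      have hrow : |∑ j, A p j * x j| = ∑ j, |A p j * x j| := by
        have hL : |∑ j, A p j * x j| = z p := by
          rw [← hmv x p, heig]
          have : (ν • x) p = ν * x p := rfl
          rw [this, abs_mul, hν, one_mul]
        have hR : ∑ j, |A p j * x j| = z p := by
          have h3 : ∑ j, |A p j * x j| = (A *ᵥ z) p := by
            rw [hmv]
            exact Finset.sum_congr rfl fun j _ => by
              rw [abs_mul, abs_of_pos (hposA p j)]
          rw [h3, heqz]
        rw [hL, hR]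
      have hlt := abs_sum_lt (fun j => A p j * x j) p q
        (mul_pos (hposA p p) hp) (mul_neg_of_pos_of_neg (hposA p q) hq)
      exact absurd hrow (ne_of_lt hlt)
    rcases lt_or_gt_of_ne (hx_ne jx) with hneg | hpos
    · right
      intro i
      rcases lt_or_gt_of_ne (hx_ne i) with h | h
      · exact h
      · exact absurd (hnomix i jx h hneg) (fun f => f)
    · left
      intro i
      rcases lt_or_gt_of_ne (hx_ne i) with h | h
      · exact absurd (hnomix jx i hpos h) (fun f => f)
      · exact h
  -- eigenvalues of modulus 1 equal 1
  have heig_one : ∀ (x : Fin m → ℝ) (ν : ℝ), |ν| = 1 → A *ᵥ x = ν • x →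
      (∃ j, x j ≠ 0) → ν = 1 := by
    intro x ν hν heig hxne
    obtain ⟨i⟩ := id hne
    rcases hsign x ν hν heig hxne with hpos | hneg
    · have h1 : (A *ᵥ x) i = ν * x i := by rw [heig]; rfl
      have h2 : 0 < (A *ᵥ x) i := by
        rw [hmv]
        exact Finset.sum_pos (fun j _ => mul_pos (hposA i j) (hpos j)) Finset.univ_nonempty
      have hν_pos : 0 < ν := by
        by_contra h
        push_neg at h
        nlinarith [hpos i]
      rcases (abs_eq zero_le_one).1 hν with h | h
      · exact h
      · linarith
    · have h1 : (A *ᵥ x) i = ν * x i := by rw [heig]; rfl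
      have h2 : (A *ᵥ x) i < 0 := by
        rw [hmv]
        have : ∀ j ∈ Finset.univ, A i j * x j < 0 :=
          fun j _ => mul_neg_of_pos_of_neg (hposA i j) (hneg j)
        have h3 : 0 < ∑ j, -(A i j * x j) :=
          Finset.sum_pos (fun j hj => neg_pos.2 (this j hj)) Finset.univ_nonempty
        rw [Finset.sum_neg_distrib] at h3
        linarith
      have hν_pos : 0 < ν := by
        by_contra h
        push_neg at h
        nlinarith [hneg i]
      rcases (abs_eq zero_le_one).1 hν with h | h
      · exact h
      · linarith
  -- strict inequality for eigenvalues that are not 1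
  have hlam_lt : ∀ i, lam i ≠ 1 → |lam i| < 1 := by
    intro i h1
    rcases lt_or_eq_of_le (hall i) with h | h
    · exact h
    · exact absurd (heig_one (B i) (lam i) h (hAB i) (hBne i)) h1
  -- coordinates of A *ᵥ x
  have hco_combo : ∀ (d : Fin m → ℝ) (i' : Fin m),
      co (fun j => ∑ i, d i * B i j) i' = d i' := by
    intro d i'
    calc co (fun j => ∑ i, d i * B i j) i' = ∑ l, B i' l * ∑ i, d i * B i l := rfl
      _ = ∑ l, ∑ i, d i * (B i' l * B i l) := by
          refine Finset.sum_congr rfl fun l _ => ?_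
          rw [Finset.mul_sum]
          exact Finset.sum_congr rfl fun i _ => by ring
      _ = ∑ i, ∑ l, d i * (B i' l * B i l) := Finset.sum_comm
      _ = ∑ i, d i * (∑ l, B i' l * B i l) := by
          refine Finset.sum_congr rfl fun i _ => ?_
          rw [Finset.mul_sum]
      _ = d i' := by
          simp only [horth, mul_ite, mul_one, mul_zero, Finset.sum_ite_eq,
            Finset.mem_univ, if_true]
  have hcoA : ∀ (x : Fin m → ℝ) (i : Fin m), co (A *ᵥ x) i = co x i * lam i := by
    intro x i
    have h1 : (A *ᵥ x) = fun j => ∑ i', (co x i' * lam i') * B i' j := funext (hmul x)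
    rw [h1, hco_combo]
  -- the top eigen-index
  have hco_u_eigen : ∀ i, co u i * lam i = co u i := fun i => by
    rw [← hcoA u i, hAu]
  obtain ⟨i1, hi1⟩ : ∃ i1, co u i1 ≠ 0 := by
    by_contra h
    push_neg at h
    have h1 := hpars u
    rw [hu1] at h1
    have h2 : ∑ i, (co u i) ^ 2 = 0 :=
      Finset.sum_eq_zero fun i _ => by rw [h i]; ring
    rw [h2] at h1
    exact one_ne_zero h1
  have hlam_i1 : lam i1 = 1 := by
    have h1 := hco_u_eigen i1
    have h2 : co u i1 * (lam i1 - 1) = 0 := by linarith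
    rcases mul_eq_zero.1 h2 with h | h
    · exact absurd h hi1
    · linarith
  have huniq : ∀ i, i ≠ i1 → lam i ≠ 1 := by
    intro i hii1 hlam1
    have hs1 := hsign (B i) 1 (abs_one) (by rw [hAB i, hlam1, one_smul]) (hBne i)
    have hs2 := hsign (B i1) 1 (abs_one) (by rw [hAB i1, hlam_i1, one_smul]) (hBne i1)
    have horth0 : ∑ j, B i j * B i1 j = 0 := by
      rw [horth i i1, if_neg hii1]
    have hne0 : ∑ j, B i j * B i1 j ≠ 0 := by
      rcases hs1 with h1 | h1 <;> rcases hs2 with h2 | h2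
      · exact ne_of_gt (Finset.sum_pos
          (fun j _ => mul_pos (h1 j) (h2 j)) Finset.univ_nonempty)
      · refine ne_of_lt ?_
        have h3 : 0 < ∑ j, -(B i j * B i1 j) := Finset.sum_pos
          (fun j _ => by nlinarith [h1 j, h2 j]) Finset.univ_nonempty
        rw [Finset.sum_neg_distrib] at h3
        linarith
      · refine ne_of_lt ?_
        have h3 : 0 < ∑ j, -(B i j * B i1 j) := Finset.sum_pos
          (fun j _ => by nlinarith [h1 j, h2 j]) Finset.univ_nonempty
        rw [Finset.sum_neg_distrib] at h3
        linarith
      · exact ne_of_gt (Finset.sum_pos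
          (fun j _ => by nlinarith [h1 j, h2 j]) Finset.univ_nonempty)
    exact hne0 horth0
  have hco_u_zero : ∀ i, i ≠ i1 → co u i = 0 := by
    intro i hii1
    have h1 := hco_u_eigen i
    by_contra h
    have h2 : lam i = 1 := by
      have h3 : co u i * (lam i - 1) = 0 := by linarith
      rcases mul_eq_zero.1 h3 with h4 | h4
      · exact absurd h4 h
      · linarith
    exact huniq i hii1 h2
  -- the spectral gap
  set μ : ℝ := Finset.univ.sup' Finset.univ_nonempty
    (fun i => if i = i1 then 0 else |lam i|) with hμ
  have hμ0 : 0 ≤ μ := by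
    have := Finset.le_sup' (fun i => if i = i1 then (0:ℝ) else |lam i|)
      (Finset.mem_univ i1)
    rw [if_pos rfl] at this
    exact this
  have hμ1 : μ < 1 := by
    rw [hμ, Finset.sup'_lt_iff]
    intro i _
    by_cases h : i = i1
    · rw [if_pos h]; exact one_pos
    · rw [if_neg h]; exact hlam_lt i (huniq i h)
  have hμge : ∀ i, i ≠ i1 → |lam i| ≤ μ := by
    intro i h
    have := Finset.le_sup' (fun i => if i = i1 then (0:ℝ) else |lam i|)
      (Finset.mem_univ i)
    rw [if_neg h] at this
    exact this
  refine ⟨u, μ, hu_pos, hAu, hu1, hμ0, hμ1, ?_⟩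
  intro y hy
  have hco_y_i1 : co y i1 = 0 := by
    have h1 : ∑ i, u i * y i = ∑ i, co u i * co y i := by
      calc ∑ i, u i * y i
          = ∑ j, (∑ i, co u i * B i j) * (∑ i', co y i' * B i' j) := by
            refine Finset.sum_congr rfl fun j _ => ?_
            rw [← hexp u j, ← hexp y j]
        _ = ∑ i, co u i * co y i := dot_combo B horth _ _
    rw [hy] at h1
    have h2 : ∑ i, co u i * co y i = co u i1 * co y i1 := by
      refine Finset.sum_eq_single i1 (fun i _ hii1 => by rw [hco_u_zero i hii1, zero_mul])
        (fun h => absurd (Finset.mem_univ i1) h)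
    rw [h2] at h1
    rcases mul_eq_zero.1 h1.symm with h | h
    · exact absurd h hi1
    · exact h
  calc ∑ j, ((A *ᵥ y) j) ^ 2 = ∑ i, (co y i * lam i) ^ 2 := by
        rw [hpars (A *ᵥ y)]
        exact Finset.sum_congr rfl fun i _ => by rw [hcoA y i]
    _ ≤ ∑ i, μ ^ 2 * (co y i) ^ 2 := by
        refine Finset.sum_le_sum fun i _ => ?_
        by_cases h : i = i1
        · rw [h, hco_y_i1]
          simp [sq_nonneg]
        · have h1 := hμge i h
          have h2 : lam i ^ 2 ≤ μ ^ 2 := by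
            nlinarith [abs_nonneg (lam i), sq_abs (lam i)]
          nlinarith [sq_nonneg (co y i)]
    _ = μ ^ 2 * ∑ i, (co y i) ^ 2 := (Finset.mul_sum _ _ _).symm
    _ = μ ^ 2 * ∑ j, (y j) ^ 2 := by rw [← hpars y]

lemma converge (A : Matrix (Fin m) (Fin m) ℝ) (hsymm : A.IsSymm)
    (u : Fin m → ℝ) (μ : ℝ) (hu_pos : ∀ i, 0 < u i) (hAu : A *ᵥ u = u)
    (hu1 : ∑ i, u i ^ 2 = 1) (hμ0 : 0 ≤ μ) (hμ1 : μ < 1)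
    (hgap : ∀ y : Fin m → ℝ, (∑ i, u i * y i) = 0 →
      ∑ j, ((A *ᵥ y) j) ^ 2 ≤ μ ^ 2 * ∑ j, (y j) ^ 2)
    (w : ℕ → Fin m → ℝ) (h0 : ∀ n i, 0 ≤ w n i)
    (hrec : ∀ n i, w (n + 1) i ≤ (A *ᵥ w n) i) :
    ∃ x : Fin m → ℝ, (∀ i, 0 ≤ x i) ∧
      Tendsto (fun n => ∑ i, (w n i - x i) ^ 2) atTop (nhds 0) := by
  set α : ℕ → ℝ := fun n => ∑ i, u i * w n i with hα
  have hα0 : ∀ n, 0 ≤ α n :=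
    fun n => Finset.sum_nonneg fun i _ => mul_nonneg (hu_pos i).le (h0 n i)
  have hαdec : ∀ n, α (n + 1) ≤ α n := by
    intro n
    calc α (n + 1) ≤ ∑ i, u i * (A *ᵥ w n) i :=
          Finset.sum_le_sum fun i _ => mul_le_mul_of_nonneg_left (hrec n i) (hu_pos i).le
      _ = ∑ i, (A *ᵥ u) i * w n i := symdot A hsymm u (w n)
      _ = α n := by rw [hAu]
  have hanti : Antitone α := antitone_nat_of_succ_le hαdec
  have hbdd : BddBelow (Set.range α) := ⟨0, fun x ⟨n, hn⟩ => hn ▸ hα0 n⟩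
  have hαlim : Tendsto α atTop (nhds (⨅ n, α n)) := tendsto_atTop_ciInf hanti hbdd
  set L : ℝ := ⨅ n, α n with hL
  have hL0 : 0 ≤ L := le_ciInf hα0
  set r : ℕ → Fin m → ℝ := fun n i => w n i - α n * u i with hr
  have hr_orth : ∀ n, ∑ i, u i * r n i = 0 := by
    intro n
    have h1 : ∀ i ∈ Finset.univ, u i * r n i = u i * w n i - α n * u i ^ 2 :=
      fun i _ => by rw [hr]; ring
    rw [Finset.sum_congr rfl h1, Finset.sum_sub_distrib, ← Finset.mul_sum, hu1]
    ring
  have hw_eq : ∀ n i, w n i = α n * u i + r n i := fun n i => by rw [hr]; ring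
  set N : ℕ → ℝ := fun n => ∑ i, (r n i) ^ 2 with hN
  set d : ℕ → ℝ := fun n => α n ^ 2 - α (n + 1) ^ 2 with hd
  have hN0 : ∀ n, 0 ≤ N n := fun n => Finset.sum_nonneg fun i _ => sq_nonneg _
  have hN_rec : ∀ n, N (n + 1) ≤ μ ^ 2 * N n + d n := by
    intro n
    have h1 : ∑ i, (w (n + 1) i) ^ 2 ≤ ∑ i, ((A *ᵥ w n) i) ^ 2 :=
      Finset.sum_le_sum fun i _ => pow_le_pow_left₀ (h0 (n + 1) i) (hrec n i) 2
    have h2 : A *ᵥ w n = fun i => α n * u i + (A *ᵥ r n) i := by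
      have hwn : w n = (α n • u) + r n := funext fun i => by
        rw [Pi.add_apply, Pi.smul_apply, smul_eq_mul]; exact hw_eq n i
      rw [hwn, mulVec_add, mulVec_smul, hAu]
      funext i
      simp [smul_eq_mul]
    have h3 : ∑ i, u i * (A *ᵥ r n) i = 0 := by
      rw [symdot A hsymm u (r n), hAu]
      exact hr_orth n
    have h4 : ∑ i, ((A *ᵥ w n) i) ^ 2 = α n ^ 2 + ∑ i, ((A *ᵥ r n) i) ^ 2 := by
      rw [h2]
      exact expand_sq u (A *ᵥ r n) hu1 h3 (α n)
    have h5 : ∑ i, ((A *ᵥ r n) i) ^ 2 ≤ μ ^ 2 * N n := hgap (r n) (hr_orth n)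
    have h6 : ∑ i, (w (n + 1) i) ^ 2 = α (n + 1) ^ 2 + N (n + 1) := by
      have h7 : ∀ i ∈ Finset.univ, (w (n + 1) i) ^ 2
          = (α (n + 1) * u i + r (n + 1) i) ^ 2 := fun i _ => by rw [← hw_eq]
      rw [Finset.sum_congr rfl h7]
      exact expand_sq u (r (n + 1)) hu1 (hr_orth (n + 1)) (α (n + 1))
    show N (n + 1) ≤ μ ^ 2 * N n + (α n ^ 2 - α (n + 1) ^ 2)
    linarith
  have hd_to0 : Tendsto d atTop (nhds 0) := by
    have h1 : Tendsto (fun n => α n ^ 2) atTop (nhds (L ^ 2)) := hαlim.pow 2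
    have h2 : Tendsto (fun n => α (n + 1) ^ 2) atTop (nhds (L ^ 2)) :=
      h1.comp (tendsto_add_atTop_nat 1)
    have h3 := h1.sub h2
    rw [sub_self] at h3
    exact h3
  have hNlim : Tendsto N atTop (nhds 0) :=
    geom_rec (μ ^ 2) (sq_nonneg μ) (by nlinarith) N d hN0 hN_rec hd_to0
  refine ⟨fun i => L * u i, fun i => mul_nonneg hL0 (hu_pos i).le, ?_⟩
  have hfin : ∀ n, ∑ i, (w n i - L * u i) ^ 2 = (α n - L) ^ 2 + N n := by
    intro n
    have h1 : ∀ i ∈ Finset.univ, (w n i - L * u i) ^ 2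
        = ((α n - L) * u i + r n i) ^ 2 := fun i _ => by
      rw [hr]; ring_nf
    rw [Finset.sum_congr rfl h1]
    exact expand_sq u (r n) hu1 (hr_orth n) (α n - L)
  have h8 : Tendsto (fun n => (α n - L) ^ 2 + N n) atTop (nhds 0) := by
    have h9 : Tendsto (fun n => (α n - L) ^ 2) atTop (nhds 0) := by
      have h10 : Tendsto (fun n => α n - L) atTop (nhds (L - L)) :=
        hαlim.sub (tendsto_const_nhds (x := L))
      rw [sub_self] at h10
      have h11 := h10.pow 2
      simpa using h11
    simpa using h9.add hNlim
  simpa only [hfin] using h8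

end Stmt10Aux

/-- Rational vector system with real symmetric `A` having strictly
positive entries and nonnegative damping vectors. If the spectral radius of `A` equals
`1`, then every solution `(v_n)` converges to a (not necessarily prime) period-`k`
sequence `p` of nonnegative vectors: `‖v_n − p_n‖ → 0`. -/
theorem stmt_10 {m k : ℕ} (hm : 1 ≤ m) (hk : 2 ≤ k)
    (A : Matrix (Fin m) (Fin m) ℝ) (hsymm : A.IsSymm) (hposA : ∀ i j, 0 < A i j)
    (q : Fin m → ℕ → Fin m → ℝ) (hq : ∀ i j l, 0 ≤ q i j l)
    (hρ : spectralRadius ℝ A = 1)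
    (v : ℕ → Fin m → ℝ) (hv : IsRationalSolution k A q v) :
    ∃ p : ℕ → Fin m → ℝ, (∀ n i, 0 ≤ p n i) ∧ (∀ n, p (n + k) = p n) ∧
      Tendsto (fun n => euclNorm (v n - p n)) atTop (nhds 0) := by
  obtain ⟨u, μ, hu_pos, hAu, hu1, hμ0, hμ1, hgap⟩ := Stmt10Aux.perron hm A hsymm hposA hρ
  obtain ⟨hv0, hveq⟩ := hv
  have hk0 : 0 < k := by omega
  have hmv : ∀ (x : Fin m → ℝ) i, (A *ᵥ x) i = ∑ j, A i j * x j := fun x i => rfl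
  have hvle : ∀ n, k ≤ n → ∀ i, v n i ≤ (A *ᵥ v (n - k)) i := by
    intro n hn i
    rw [hveq n hn i]
    have hnum : 0 ≤ (A *ᵥ v (n - k)) i := by
      rw [hmv]
      exact Finset.sum_nonneg fun j _ => mul_nonneg (hposA i j).le (hv0 _ j)
    have hden : 1 ≤ 1 + ∑ j ∈ Finset.Ico 1 k, (q i j) ⬝ᵥ v (n - j) := by
      have h1 : 0 ≤ ∑ j ∈ Finset.Ico 1 k, (q i j) ⬝ᵥ v (n - j) :=
        Finset.sum_nonneg fun j _ => Finset.sum_nonneg fun l _ =>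
          mul_nonneg (hq i j l) (hv0 _ l)
      linarith
    exact div_le_self hnum hden
  have hres : ∀ r : ℕ, ∃ x : Fin m → ℝ, (∀ i, 0 ≤ x i) ∧
      Tendsto (fun n => ∑ i, (v (r + (n + 1) * k) i - x i) ^ 2) atTop (nhds 0) := by
    intro r
    refine Stmt10Aux.converge A hsymm u μ hu_pos hAu hu1 hμ0 hμ1 hgap
      (fun n => v (r + (n + 1) * k)) (fun n i => hv0 _ i) ?_
    intro n i
    have h1 := hvle (r + (n + 2) * k) (by nlinarith) i
    have h2 : r + (n + 2) * k - k = r + (n + 1) * k := by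
      have : (n + 2) * k = (n + 1) * k + k := by ring
      omega
    rw [h2] at h1
    show v (r + (n + 1 + 1) * k) i ≤ (A *ᵥ v (r + (n + 1) * k)) i
    have h3 : r + (n + 1 + 1) * k = r + (n + 2) * k := by ring_nf
    rw [h3]
    exact h1
  choose x hx1 hx2 using hres
  refine ⟨fun n => x (n % k), fun n i => hx1 _ i,
    fun n => by show x ((n + k) % k) = x (n % k); rw [Nat.add_mod_right], ?_⟩
  have hgoal : Tendsto (fun n => ∑ i, (v n i - x (n % k) i) ^ 2) atTop (nhds 0) := by
    rw [Metric.tendsto_atTop]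
    intro ε hε
    have hNr : ∀ r : ℕ, ∃ Nr : ℕ, ∀ n ≥ Nr,
        ∑ i, (v (r + (n + 1) * k) i - x r i) ^ 2 < ε := by
      intro r
      obtain ⟨Nr, hN⟩ := Metric.tendsto_atTop.1 (hx2 r) ε hε
      refine ⟨Nr, fun n hn => ?_⟩
      have := hN n hn
      rw [Real.dist_eq, sub_zero] at this
      exact lt_of_abs_lt this
    choose Nr hNr using hNr
    set J := (Finset.range k).sup Nr with hJ
    refine ⟨(J + 2) * k, fun n hn => ?_⟩
    have hrk : n % k < k := Nat.mod_lt _ hk0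
    have hdiv : J + 2 ≤ n / k := (Nat.le_div_iff_mul_le hk0).2 hn
    have hmod := Nat.mod_add_div n k
    set j := n / k with hj
    have hj1 : 1 ≤ j := by omega
    have hn_eq : n % k + (j - 1 + 1) * k = n := by
      have h4 : j - 1 + 1 = j := by omega
      rw [h4, Nat.mul_comm]
      exact hmod
    have hNrJ : Nr (n % k) ≤ J := Finset.le_sup (Finset.mem_range.2 hrk)
    have h5 := hNr (n % k) (j - 1) (by omega)
    rw [hn_eq] at h5
    rw [Real.dist_eq, sub_zero, abs_of_nonneg
      (Finset.sum_nonneg fun i _ => sq_nonneg _)]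
    exact h5
  have heq : (fun n => euclNorm (v n - x (n % k)))
      = fun n => Real.sqrt (∑ i, (v n i - x (n % k) i) ^ 2) := by
    funext n
    simp [euclNorm]
  rw [heq]
  have h6 := (Real.continuous_sqrt.tendsto 0).comp hgoal
  simpa [Function.comp_def, Real.sqrt_zero] using h6
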